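/- For any skew shape A, the partition rows(A) (the weakly decreasing rearrangement of the row lengths of A) lies in the support of A, and it is the least dominant element of the support: every partition λ in the support of A satisfies rows(A) ⊴ λ. Explicitly, the filling of A constructed by repeatedly filling the rightmost not-yet-filled box of each non-empty row with the entries 1, 2, … from top to bottom is a Littlewood–Richardson filling of A with content rows(A). -/

import Mathlib

open Finset

/-- The weakly decreasing rearrangement of a finite sequence (list) of natural numbers,
i.e. the partition obtained by sorting its parts into weakly decreasing order. -/
def sortDesc (l : List ℕ) : List ℕ := l.mergeSort (fun a b => b ≤ a)

/-- The (extended) dominance order on partitions, represented as weakly decreasing lists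
of natural numbers (parts beyond the length of the list are taken to be `0`):
`Dom a b` means `a ⊴ b`, i.e. `a₁ + ⋯ + a_k ≤ b₁ + ⋯ + b_k` for all `k`. -/
def Dom (a b : List ℕ) : Prop := ∀ k : ℕ, (a.take k).sum ≤ (b.take k).sum

/-- The conjugate (transpose) of a partition given as a list of natural numbers:
the `j`-th entry (0-indexed) is the number of parts that are `> j`. -/
def conj (l : List ℕ) : List ℕ :=
  (List.range (l.foldr max 0)).map (fun j => (l.filter (fun x => j < x)).length)

/-- A skew shape `λ/μ`: a pair of Young diagrams `μ ⊆ λ`. -/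
structure SkewShape where
  outer : YoungDiagram
  inner : YoungDiagram
  le : inner ≤ outer

namespace SkewShape

/-- The cells (boxes) of a skew shape: boxes of the outer diagram not in the inner one. -/
def cells (A : SkewShape) : Finset (ℕ × ℕ) := A.outer.cells \ A.inner.cells

/-- The number of rows of (the outer shape of) a skew shape. -/
def numRows (A : SkewShape) : ℕ := A.outer.colLen 0

/-- The number of columns of (the outer shape of) a skew shape. -/
def numCols (A : SkewShape) : ℕ := A.outer.rowLen 0

/-- `A.overlap k i` is the number of columns occupied in common by the `k` consecutive
rows `i, i+1, …, i+k-1` of the skew shape `A` (rows indexed from 0). -/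
def overlap (A : SkewShape) (k i : ℕ) : ℕ :=
  ((Finset.range A.numCols).filter (fun j => ∀ t, t < k → (i + t, j) ∈ A.cells)).card

/-- `rows_k(A)`: the weakly decreasing rearrangement of the row-overlap numbers
`(overlap k 0, overlap k 1, …)`; zero parts are discarded (a partition is identified
with its zero-padded versions).  `A.rowsK 1` is the partition of row lengths of `A`. -/
def rowsK (A : SkewShape) (k : ℕ) : List ℕ :=
  sortDesc (((List.range (A.numRows + 1 - k)).map (A.overlap k)).filter (fun x => 0 < x))

/-- The transpose (conjugate) of a skew shape. -/
def transpose (A : SkewShape) : SkewShape :=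
  ⟨A.outer.transpose, A.inner.transpose, YoungDiagram.transpose_mono A.le⟩

/-- `cols_l(A)`: the weakly decreasing rearrangement of the column-overlap numbers of `A`;
`A.colsK 1` is the partition of column lengths of `A`. -/
def colsK (A : SkewShape) (l : ℕ) : List ℕ := A.transpose.rowsK l

/-- `rects k l A` is the number of `k × l` rectangular subdiagrams (contiguous `k × l`
blocks of boxes) contained inside the skew shape `A`, recorded by the position of
their top-left corner. -/
def rects (A : SkewShape) (k l : ℕ) : ℕ :=
  (((Finset.range A.numRows) ×ˢ (Finset.range A.numCols)).filter
    (fun p => ∀ t, t < k → ∀ u, u < l → (p.1 + t, p.2 + u) ∈ A.cells)).card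

end SkewShape

/-- A semistandard Young tableau of skew shape `A`: a filling of the boxes of `A`
with positive integers, weakly increasing along rows and strictly increasing down
columns (entries outside `A` are recorded as `0`). -/
structure SkewSsyt (A : SkewShape) where
  entry : ℕ → ℕ → ℕ
  pos : ∀ i j, (i, j) ∈ A.cells → 1 ≤ entry i j
  zeros : ∀ i j, (i, j) ∉ A.cells → entry i j = 0
  row_weak : ∀ i j1 j2, j1 ≤ j2 → (i, j1) ∈ A.cells → (i, j2) ∈ A.cells →
      entry i j1 ≤ entry i j2
  col_strict : ∀ i1 i2 j, i1 < i2 → (i1, j) ∈ A.cells → (i2, j) ∈ A.cells →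
      entry i1 j < entry i2 j

/-- The number of boxes of `T` filled with the entry `v`. -/
def contentCount {A : SkewShape} (T : SkewSsyt A) (v : ℕ) : ℕ :=
  (A.cells.filter (fun c => T.entry c.1 c.2 = v)).card

/-- `T` has content `ν` (a partition written as a list, 0-indexed: `ν.getD v 0` is the
`(v+1)`-st part): the number of entries equal to `v + 1` is the `(v+1)`-st part of `ν`. -/
def HasContent {A : SkewShape} (T : SkewSsyt A) (ν : List ℕ) : Prop :=
  ∀ v : ℕ, contentCount T (v + 1) = ν.getD v 0

/-- `readBefore c c'` : the box `c` comes strictly before the box `c'` in the reverse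
reading order (rows top to bottom, each row read right to left). -/
def readBefore (c c' : ℕ × ℕ) : Prop := c.1 < c'.1 ∨ (c.1 = c'.1 ∧ c'.2 < c.2)

instance (c c' : ℕ × ℕ) : Decidable (readBefore c c') := by
  unfold readBefore; infer_instance

/-- `T` is a Littlewood–Richardson filling: its reverse reading word is a lattice word,
i.e. at every box `c` carrying an entry `v + 2`, the number of occurrences of `v + 2`
read so far (weakly up to `c`) is at most the number of occurrences of `v + 1` read
strictly before `c`. -/
def IsLR {A : SkewShape} (T : SkewSsyt A) : Prop :=
  ∀ c ∈ A.cells, ∀ v : ℕ, T.entry c.1 c.2 = v + 2 →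
    (A.cells.filter (fun c' => T.entry c'.1 c'.2 = v + 2 ∧ (readBefore c' c ∨ c' = c))).card ≤
    (A.cells.filter (fun c' => T.entry c'.1 c'.2 = v + 1 ∧ readBefore c' c)).card

/-- The support of the skew Schur function `s_A`: by the Littlewood–Richardson rule,
the set of partitions `ν` (weakly decreasing lists) admitting an LR filling of `A`
of content `ν`, i.e. those `ν` with `s_ν` appearing with nonzero coefficient in `s_A`. -/
def SkewShape.support (A : SkewShape) : Set (List ℕ) :=
  { ν | ν.Pairwise (· ≥ ·) ∧ ∃ T : SkewSsyt A, IsLR T ∧ HasContent T ν }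

/-- The coefficient of the Schur function `s_ν` in the Schur expansion of `s_A`:
by the Littlewood–Richardson rule, the number of LR fillings of `A` of content `ν`. -/
noncomputable def lrCoeff (A : SkewShape) (ν : List ℕ) : ℕ :=
  Nat.card { T : SkewSsyt A // IsLR T ∧ HasContent T ν }

/-- `s_A − s_B` is Schur-positive: every coefficient in the Schur expansion of the
difference is nonnegative, i.e. (by the LR rule) each LR coefficient of `B` is at most
the corresponding one of `A`. -/
def SchurPositiveDiff (A B : SkewShape) : Prop :=
  ∀ ν : List ℕ, ν.Pairwise (· ≥ ·) → lrCoeff B ν ≤ lrCoeff A ν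

/-- The skew Schur function `s_A = Σ_T x^T`, as a formal power series in the variables
`x_0, x_1, x_2, …` (variable `x_v` recording entries equal to `v + 1`): the coefficient
of the monomial with exponents `d` is the number of SSYT of shape `A` and content `d`. -/
noncomputable def skewSchur (A : SkewShape) : MvPowerSeries ℕ ℤ :=
  fun d => (Nat.card { T : SkewSsyt A // ∀ v : ℕ, contentCount T (v + 1) = d v } : ℤ)

/-- The boxes remaining after deleting the top box of every non-empty column of `A`:
a box survives iff there is a box of `A` directly above it. -/
def trimCells (A : SkewShape) : Finset (ℕ × ℕ) :=
  A.cells.filter (fun c => 1 ≤ c.1 ∧ (c.1 - 1, c.2) ∈ A.cells)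

/-- The set of boxes of the skew shape `A ∗ B`, obtained by positioning `B` immediately
below and to the left of `A` so that `A` and `B` share no common row or column. -/
def starCells (A B : SkewShape) : Finset (ℕ × ℕ) :=
  A.cells.image (fun c => (c.1, c.2 + B.numCols)) ∪
    B.cells.image (fun c => (c.1 + A.numRows, c.2))

/-- The straight shape (partition) `μ`, viewed as the skew shape `μ/(0)`. -/
def ofYD (μ : YoungDiagram) : SkewShape := ⟨μ, ⊥, bot_le⟩

/-- The list of parts `(μ_k, μ_{k+1}, …, μ_l)` (1-indexed) of a partition `μ` given as a
Young diagram, parts beyond the length of `μ` being `0`. -/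
def tailParts (μ : YoungDiagram) (k l : ℕ) : List ℕ :=
  (List.range (l + 1 - k)).map (fun t => μ.rowLen (k - 1 + t))


lemma sortDesc_perm (l : List ℕ) : (sortDesc l).Perm l := List.mergeSort_perm l _

lemma sortDesc_sorted (l : List ℕ) : (sortDesc l).Pairwise (· ≥ ·) := by
  have h := List.pairwise_mergeSort (le := fun a b : ℕ => decide (b ≤ a))
    (fun a b c hab hbc => by simp at *; omega)
    (fun a b => by simp; omega) l
  exact h.imp (fun {a b} hab => by simpa using hab)

lemma take_sum_eq (l : List ℕ) (k : ℕ) :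
    (l.take k).sum = ∑ v ∈ Finset.range k, l.getD v 0 := by
  induction l generalizing k with
  | nil => simp
  | cons a t ih =>
    cases k with
    | zero => simp
    | succ k =>
      rw [List.take_succ_cons, List.sum_cons, ih, Finset.sum_range_succ']
      simp [add_comm]

lemma sorted_le_getD_iff (s : List ℕ) (hs : s.Pairwise (· ≥ ·)) (v p : ℕ) (hp : 1 ≤ p) :
    p ≤ s.getD v 0 ↔ v + 1 ≤ (s.filter (fun x => p ≤ x)).length := by
  induction s generalizing v with
  | nil => simpa using by omega
  | cons a t ih =>
    have ha : ∀ y ∈ t, a ≥ y := fun _ h => List.rel_of_pairwise_cons hs h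
    have ht : t.Pairwise (· ≥ ·) := hs.of_cons
    cases v with
    | zero =>
      by_cases h : p ≤ a
      · simp [List.filter_cons, h]
      · simp only [List.getD_cons_zero]
        constructor
        · intro hh; omega
        · intro hh
          rcases List.length_pos_iff_exists_mem.1 (by omega : 0 < (List.filter (fun x => decide (p ≤ x)) (a :: t)).length) with ⟨y, hy⟩
          rw [List.mem_filter] at hy
          have := hy.2
          simp at this
          rcases List.mem_cons.1 hy.1 with rfl | hyt
          · omega
          · have := ha y hyt; omega
    | succ v =>
      by_cases h : p ≤ a
      · rw [List.getD_cons_succ, ih ht v]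
        simp [List.filter_cons, h]
      · have hft : List.filter (fun x => decide (p ≤ x)) t = [] := by
          rw [List.filter_eq_nil_iff]
          intro y hy; have := ha y hy; simp; omega
        have hfa : List.filter (fun x => decide (p ≤ x)) (a :: t) = [] := by
          rw [List.filter_cons, if_neg (by simpa using h)]; exact hft
        rw [List.getD_cons_succ, hfa]
        simp only [List.length_nil]
        constructor
        · intro hh
          exfalso
          rcases lt_or_ge v t.length with hv | hv
          · have : t.getD v 0 ∈ t := by
              rw [List.getD_eq_getElem _ _ hv]; exact List.getElem_mem _
            have := ha _ this; omega
          · rw [List.getD_eq_default _ _ hv] at hh; omega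
        · omega

lemma sorted_getD_eq_card (s : List ℕ) (hs : s.Pairwise (· ≥ ·)) (C v : ℕ)
    (hC : ∀ y ∈ s, y ≤ C) :
    s.getD v 0 = ((Finset.Icc 1 C).filter
      (fun p => v + 1 ≤ (s.filter (fun x => p ≤ x)).length)).card := by
  have hg : s.getD v 0 ≤ C := by
    rcases lt_or_ge v s.length with hv | hv
    · exact hC _ (by rw [List.getD_eq_getElem _ _ hv]; exact List.getElem_mem _)
    · rw [List.getD_eq_default _ _ hv]; omega
  have : ((Finset.Icc 1 C).filter
      (fun p => v + 1 ≤ (s.filter (fun x => p ≤ x)).length)) = Finset.Icc 1 (s.getD v 0) := by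
    ext p
    simp only [Finset.mem_filter, Finset.mem_Icc]
    constructor
    · rintro ⟨⟨h1, h2⟩, h3⟩
      exact ⟨h1, (sorted_le_getD_iff s hs v p h1).2 h3⟩
    · rintro ⟨h1, h2⟩
      exact ⟨⟨h1, le_trans h2 hg⟩, (sorted_le_getD_iff s hs v p h1).1 h2⟩
  rw [this, Nat.card_Icc]; omega

section cnt
variable (q : ℕ → Prop) [DecidablePred q]

def cntF (n : ℕ) : ℕ := ((Finset.range n).filter q).card

lemma cntF_mono {m n : ℕ} (h : m ≤ n) : cntF q m ≤ cntF q n :=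
  Finset.card_le_card (Finset.filter_subset_filter _ (Finset.range_subset_range.2 h))

lemma cntF_succ (i : ℕ) : cntF q (i + 1) = cntF q i + (if q i then 1 else 0) := by
  unfold cntF
  rw [Finset.range_add_one, Finset.filter_insert]
  split
  · rw [Finset.card_insert_of_notMem (by simp)]
  · simp

lemma cntF_strict {i i' : ℕ} (h : i < i') (hq : q i') : cntF q (i + 1) < cntF q (i' + 1) := by
  have h1 : cntF q (i + 1) ≤ cntF q i' := cntF_mono q h
  rw [cntF_succ q i', if_pos hq]; omega

lemma cntF_unique {i i' : ℕ} (hq : q i) (hq' : q i')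
    (h : cntF q (i + 1) = cntF q (i' + 1)) : i = i' := by
  rcases lt_trichotomy i i' with hh | hh | hh
  · exact absurd h (by have := cntF_strict q hh hq'; omega)
  · exact hh
  · exact absurd h (by have := cntF_strict q hh hq; omega)

lemma cntF_exists {m n : ℕ} (h1 : 1 ≤ m) (h2 : m ≤ cntF q n) :
    ∃ i, i < n ∧ q i ∧ cntF q (i + 1) = m := by
  induction n with
  | zero => simp [cntF] at h2; omega
  | succ n ih =>
    rw [cntF_succ] at h2
    by_cases hq : q n
    · rcases lt_or_ge (cntF q n) m with hlt | hge
      · refine ⟨n, by omega, hq, ?_⟩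
        rw [cntF_succ, if_pos hq]
        rw [if_pos hq] at h2; omega
      · obtain ⟨i, h3, h4, h5⟩ := ih hge
        exact ⟨i, by omega, h4, h5⟩
    · rw [if_neg hq] at h2
      obtain ⟨i, h3, h4, h5⟩ := ih (by omega)
      exact ⟨i, by omega, h4, h5⟩

end cnt

lemma sum_take_succ_le (s : List ℕ) (t : ℕ) (a : ℕ) (ha : ∀ y ∈ s, a ≥ y) :
    (s.take (t + 1)).sum ≤ a + (s.take t).sum := by
  rcases lt_or_ge t s.length with h | h
  · rw [List.sum_take_succ s t h]
    have : s[t] ≤ a := ha _ (List.getElem_mem _)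
    omega
  · rw [List.take_of_length_le (by omega), List.take_of_length_le h]; omega

lemma multiset_sum_le_take (s : List ℕ) (hs : s.Pairwise (· ≥ ·)) (u : Multiset ℕ) (t : ℕ)
    (hu : u ≤ (s : Multiset ℕ)) (hc : Multiset.card u ≤ t) :
    u.sum ≤ (s.take t).sum := by
  induction s generalizing u t with
  | nil =>
    have : u = 0 := Multiset.le_zero.mp (by simpa using hu)
    simp [this]
  | cons a s' ih =>
    have ha : ∀ y ∈ s', a ≥ y := fun _ h => List.rel_of_pairwise_cons hs h
    have hs' := hs.of_cons
    by_cases hmem : a ∈ u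
    · cases t with
      | zero =>
        have : u = 0 := Multiset.card_eq_zero.mp (by omega)
        rw [this] at hmem; simp at hmem
      | succ t =>
        have h1 : u.erase a ≤ (s' : Multiset ℕ) := by
          rw [Multiset.erase_le_iff_le_cons]; simpa using hu
        have h2 := ih hs' (u.erase a) t h1
          (by rw [Multiset.card_erase_of_mem hmem, Nat.pred_eq_sub_one]; omega)
        calc u.sum = a + (u.erase a).sum := by
              rw [← Multiset.sum_cons, Multiset.cons_erase hmem]
          _ ≤ a + (s'.take t).sum := by omega
          _ = ((a :: s').take (t + 1)).sum := by simp
    · have h1 : u ≤ (s' : Multiset ℕ) := by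
        rw [Multiset.le_iff_count]
        intro b
        have hb := Multiset.le_iff_count.mp hu b
        rcases eq_or_ne b a with rfl | hne
        · simp [Multiset.count_eq_zero_of_notMem hmem]
        · simpa [Multiset.count_cons, List.count_cons, hne, hne.symm] using hb
      cases t with
      | zero =>
        have : u = 0 := Multiset.card_eq_zero.mp (by omega)
        simp [this]
      | succ t =>
        have h2 := ih hs' u (t + 1) h1 hc
        calc u.sum ≤ (s'.take (t + 1)).sum := h2
          _ ≤ a + (s'.take t).sum := sum_take_succ_le s' t a ha
          _ = ((a :: s').take (t + 1)).sum := by simp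

def valDP (r : ℕ → ℕ) : ℕ → ℕ → ℕ
  | _, 0 => 0
  | 0, _ + 1 => 0
  | t + 1, i + 1 => max (valDP r (t + 1) i) (r i + valDP r t i)

lemma valDP_le_succ (r : ℕ → ℕ) (k i : ℕ) : valDP r k i ≤ valDP r k (i + 1) := by
  cases k with
  | zero => cases i <;> simp [valDP]
  | succ k => exact le_max_left _ _

lemma multiset_sum_le_valDP (r : ℕ → ℕ) (n : ℕ) (u : Multiset ℕ) (k : ℕ)
    (hu : u ≤ (Multiset.range n).map r) (hc : Multiset.card u ≤ k) :
    u.sum ≤ valDP r k n := by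
  induction n generalizing u k with
  | zero =>
    have : u = 0 := Multiset.le_zero.mp (by simpa using hu)
    simp [this, valDP]
  | succ n ih =>
    rw [Multiset.range_succ, Multiset.map_cons] at hu
    by_cases hmem : r n ∈ u
    · cases k with
      | zero =>
        have : u = 0 := Multiset.card_eq_zero.mp (by omega)
        rw [this] at hmem; simp at hmem
      | succ k =>
        have h1 : u.erase (r n) ≤ (Multiset.range n).map r := by
          rw [Multiset.erase_le_iff_le_cons]; exact hu
        have h2 := ih (u.erase (r n)) k h1
          (by rw [Multiset.card_erase_of_mem hmem, Nat.pred_eq_sub_one]; omega)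
        have : u.sum = r n + (u.erase (r n)).sum := by
          rw [← Multiset.sum_cons, Multiset.cons_erase hmem]
        have h3 : r n + (u.erase (r n)).sum ≤ r n + valDP r k n := by omega
        calc u.sum ≤ r n + valDP r k n := by omega
          _ ≤ valDP r (k + 1) (n + 1) := le_max_right _ _
    · have h1 : u ≤ (Multiset.range n).map r := by
        rw [Multiset.le_iff_count]
        intro b
        have hb := Multiset.le_iff_count.mp hu b
        rcases eq_or_ne b (r n) with rfl | hne
        · simp [Multiset.count_eq_zero_of_notMem hmem]
        · simpa [Multiset.count_cons, hne] using hb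
      exact le_trans (ih u k h1 hc) (valDP_le_succ r k n)

namespace RowsProofAux

lemma mem_cells_iff (A : SkewShape) {i j : ℕ} :
    (i, j) ∈ A.cells ↔ A.inner.rowLen i ≤ j ∧ j < A.outer.rowLen i := by
  simp only [SkewShape.cells, Finset.mem_sdiff, YoungDiagram.mem_cells,
    YoungDiagram.mem_iff_lt_rowLen]
  omega

/-- Row length of row `i` of the skew shape. -/
def rl (A : SkewShape) (i : ℕ) : ℕ := A.outer.rowLen i - A.inner.rowLen i

lemma row_lt_numRows (A : SkewShape) {c : ℕ × ℕ} (h : c ∈ A.cells) : c.1 < A.numRows := by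
  obtain ⟨i, j⟩ := c
  have h1 : (i, j) ∈ A.outer := by
    have := Finset.mem_sdiff.1 h
    simpa [YoungDiagram.mem_cells] using this.1
  have h2 : i < A.outer.colLen j := YoungDiagram.mem_iff_lt_colLen.1 h1
  exact lt_of_lt_of_le h2 (A.outer.colLen_anti 0 j (Nat.zero_le j))

lemma col_lt_numCols (A : SkewShape) {c : ℕ × ℕ} (h : c ∈ A.cells) : c.2 < A.numCols := by
  obtain ⟨i, j⟩ := c
  have h2 := ((mem_cells_iff A).1 h).2
  exact lt_of_lt_of_le h2 (A.outer.rowLen_anti 0 i (Nat.zero_le i))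

lemma rowLen_le_numCols (A : SkewShape) (i : ℕ) : A.outer.rowLen i ≤ A.numCols :=
  A.outer.rowLen_anti 0 i (Nat.zero_le i)

lemma rl_le_numCols (A : SkewShape) (i : ℕ) : rl A i ≤ A.numCols :=
  le_trans (Nat.sub_le _ _) (rowLen_le_numCols A i)

lemma overlap_one (A : SkewShape) (i : ℕ) : A.overlap 1 i = rl A i := by
  unfold SkewShape.overlap
  rw [Finset.filter_congr (q := fun j => (i, j) ∈ A.cells)
      (fun j _ => by
        constructor
        · intro h
          have h0 := h 0 (by omega)
          rwa [show i + 0 = i from rfl] at h0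
        · intro h t ht
          have ht0 : t = 0 := by omega
          subst ht0
          rwa [show i + 0 = i from rfl])]
  have heq : (Finset.range A.numCols).filter (fun j => (i, j) ∈ A.cells)
      = Finset.Ico (A.inner.rowLen i) (A.outer.rowLen i) := by
    ext j
    simp only [Finset.mem_filter, Finset.mem_range, Finset.mem_Ico, mem_cells_iff]
    constructor
    · rintro ⟨_, h⟩; exact h
    · rintro ⟨h1, h2⟩
      exact ⟨lt_of_lt_of_le h2 (rowLen_le_numCols A i), h1, h2⟩
  rw [heq, Nat.card_Ico]
  rfl

/-- The number of rows among `0,…,i` whose row length is at least `p`. -/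
def g (A : SkewShape) (p i : ℕ) : ℕ := cntF (fun i' => p ≤ rl A i') (i + 1)

lemma g_anti_p (A : SkewShape) {p p' i : ℕ} (h : p ≤ p') : g A p' i ≤ g A p i := by
  unfold g cntF
  apply Finset.card_le_card
  intro x hx
  simp only [Finset.mem_filter] at *
  exact ⟨hx.1, le_trans h hx.2⟩

/-- The canonical filling entry. -/
def centry (A : SkewShape) (i j : ℕ) : ℕ :=
  if (i, j) ∈ A.cells then g A (A.outer.rowLen i - j) i else 0

lemma centry_pos (A : SkewShape) {i j : ℕ} (h : (i, j) ∈ A.cells) : 1 ≤ centry A i j := by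
  rw [centry, if_pos h]
  have hc := (mem_cells_iff A).1 h
  have hq : A.outer.rowLen i - j ≤ rl A i := by unfold rl; omega
  have : i ∈ (Finset.range (i + 1)).filter (fun i' => A.outer.rowLen i - j ≤ rl A i') := by
    simp only [Finset.mem_filter, Finset.mem_range]
    exact ⟨by omega, hq⟩
  have := Finset.card_pos.2 ⟨i, this⟩
  exact this

lemma centry_col_strict (A : SkewShape) {i1 i2 j : ℕ} (h12 : i1 < i2)
    (h1 : (i1, j) ∈ A.cells) (h2 : (i2, j) ∈ A.cells) : centry A i1 j < centry A i2 j := by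
  rw [centry, if_pos h1, centry, if_pos h2]
  have hc1 := (mem_cells_iff A).1 h1
  have hc2 := (mem_cells_iff A).1 h2
  set p1 := A.outer.rowLen i1 - j
  set p2 := A.outer.rowLen i2 - j
  have hle : A.outer.rowLen i2 ≤ A.outer.rowLen i1 := A.outer.rowLen_anti i1 i2 (le_of_lt h12)
  have hpp : p2 ≤ p1 := by omega
  have s1 : g A p1 i1 ≤ g A p2 i1 := g_anti_p A hpp
  have s2 : g A p2 i1 = cntF (fun i' => p2 ≤ rl A i') (i1 + 1) := rfl
  have s3 : cntF (fun i' => p2 ≤ rl A i') (i1 + 1) < cntF (fun i' => p2 ≤ rl A i') (i2 + 1) := by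
    apply cntF_strict _ h12
    unfold rl; omega
  exact lt_of_le_of_lt s1 s3

lemma centry_row_weak (A : SkewShape) {i j1 j2 : ℕ} (h12 : j1 ≤ j2)
    (h1 : (i, j1) ∈ A.cells) (h2 : (i, j2) ∈ A.cells) : centry A i j1 ≤ centry A i j2 := by
  rw [centry, if_pos h1, centry, if_pos h2]
  exact g_anti_p A (by omega)

/-- The canonical Littlewood–Richardson filling of a skew shape. -/
def canonT (A : SkewShape) : SkewSsyt A where
  entry := centry A
  pos := fun i j h => centry_pos A h
  zeros := fun i j h => by rw [centry, if_neg h]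
  row_weak := fun i j1 j2 h12 h1 h2 => centry_row_weak A h12 h1 h2
  col_strict := fun i1 i2 j h12 h1 h2 => centry_col_strict A h12 h1 h2

/-- Content of the canonical filling, in terms of threshold counts. -/
lemma canon_contentCount (A : SkewShape) (v : ℕ) :
    contentCount (canonT A) (v + 1) =
      ((Finset.Icc 1 A.numCols).filter
        (fun p => v + 1 ≤ cntF (fun i' => p ≤ rl A i') A.numRows)).card := by
  apply Finset.card_bij (fun c _ => A.outer.rowLen c.1 - c.2)
  · rintro ⟨i, j⟩ hc
    simp only [Finset.mem_filter] at hc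
    obtain ⟨hcell, hE⟩ := hc
    have hm := (mem_cells_iff A).1 hcell
    rw [show (canonT A).entry i j = centry A i j from rfl, centry, if_pos hcell] at hE
    simp only [Finset.mem_filter, Finset.mem_Icc]
    refine ⟨⟨by omega, ?_⟩, ?_⟩
    · have := rowLen_le_numCols A i
      omega
    · rw [← hE]
      unfold g
      exact cntF_mono _ (row_lt_numRows A hcell)
  · rintro ⟨i1, j1⟩ h1 ⟨i2, j2⟩ h2 heq
    simp only [Finset.mem_filter] at h1 h2
    obtain ⟨hcell1, hE1⟩ := h1
    obtain ⟨hcell2, hE2⟩ := h2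
    have hm1 := (mem_cells_iff A).1 hcell1
    have hm2 := (mem_cells_iff A).1 hcell2
    rw [show (canonT A).entry i1 j1 = centry A i1 j1 from rfl, centry, if_pos hcell1] at hE1
    rw [show (canonT A).entry i2 j2 = centry A i2 j2 from rfl, centry, if_pos hcell2] at hE2
    simp only at heq
    have hq1 : A.outer.rowLen i1 - j1 ≤ rl A i1 := by unfold rl; omega
    have hq2 : A.outer.rowLen i2 - j2 ≤ rl A i2 := by unfold rl; omega
    have hii : i1 = i2 := by
      rw [heq] at hE1 hq1
      exact cntF_unique (fun i' => A.outer.rowLen i2 - j2 ≤ rl A i') hq1 hq2 (hE1.trans hE2.symm)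
    subst hii
    have : j1 = j2 := by omega
    rw [this]
  · intro p hp
    simp only [Finset.mem_filter, Finset.mem_Icc] at hp
    obtain ⟨⟨hp1, hp2⟩, hpm⟩ := hp
    obtain ⟨i, hin, hqi, hcnt⟩ := cntF_exists _ (by omega : 1 ≤ v + 1) hpm
    have hrow : p ≤ rl A i := hqi
    have hj : (i, A.outer.rowLen i - p) ∈ A.cells := by
      rw [mem_cells_iff]
      unfold rl at hrow
      constructor <;> omega
    refine ⟨(i, A.outer.rowLen i - p), ?_, ?_⟩
    · simp only [Finset.mem_filter]
      refine ⟨hj, ?_⟩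
      rw [show (canonT A).entry i (A.outer.rowLen i - p) = centry A i (A.outer.rowLen i - p) from rfl,
        centry, if_pos hj]
      have hple : p ≤ A.outer.rowLen i := by
        unfold rl at hrow; omega
      rw [show A.outer.rowLen i - (A.outer.rowLen i - p) = p by omega]
      exact hcnt
    · have hple : p ≤ A.outer.rowLen i := by
        unfold rl at hrow; omega
      simp only
      omega

lemma cntF_eq_list (q : ℕ → Prop) [DecidablePred q] (n : ℕ) :
    ((List.range n).filter (fun i => decide (q i))).length = cntF q n := by
  induction n with
  | zero => simp [cntF]
  | succ n ih =>
    rw [List.range_succ, List.filter_append, List.length_append, cntF_succ q n, ih]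
    by_cases h : q n <;> simp [h]

lemma rowsK_one_eq (A : SkewShape) :
    A.rowsK 1 = sortDesc (((List.range A.numRows).map (A.overlap 1)).filter (fun x => 0 < x)) := by
  unfold SkewShape.rowsK
  rw [show A.numRows + 1 - 1 = A.numRows by omega]

lemma rowsK_filter_length (A : SkewShape) (p : ℕ) (hp : 1 ≤ p) :
    ((A.rowsK 1).filter (fun x => p ≤ x)).length = cntF (fun i => p ≤ rl A i) A.numRows := by
  rw [rowsK_one_eq]
  set lp := ((List.range A.numRows).map (A.overlap 1)).filter (fun x => 0 < x) with hlp
  have hperm : List.Perm ((sortDesc lp).filter (fun x => decide (p ≤ x))) (lp.filter (fun x => decide (p ≤ x))) :=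
    (sortDesc_perm lp).filter _
  rw [hperm.length_eq]
  rw [hlp, List.filter_filter]
  have hcong : List.filter (fun a => decide (p ≤ a) && decide (0 < a))
        ((List.range A.numRows).map (A.overlap 1))
      = List.filter (fun a => decide (p ≤ a)) ((List.range A.numRows).map (A.overlap 1)) := by
    apply List.filter_congr
    intro x _
    by_cases h : p ≤ x
    · have : 0 < x := by omega
      simp [h, this]
    · simp [h]
  rw [hcong, List.filter_map, List.length_map]
  have hcong2 : List.filter ((fun a => decide (p ≤ a)) ∘ A.overlap 1) (List.range A.numRows)
      = List.filter (fun i => decide (p ≤ rl A i)) (List.range A.numRows) := by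
    apply List.filter_congr
    intro x _
    simp [Function.comp, overlap_one]
  rw [hcong2, cntF_eq_list]

lemma rowsK_le_numCols (A : SkewShape) : ∀ y ∈ A.rowsK 1, y ≤ A.numCols := by
  intro y hy
  rw [rowsK_one_eq] at hy
  have hy2 := (sortDesc_perm _).mem_iff.1 hy
  have hy3 := List.mem_of_mem_filter hy2
  obtain ⟨i, _, rfl⟩ := List.mem_map.1 hy3
  rw [overlap_one]
  exact rl_le_numCols A i

lemma canon_hasContent (A : SkewShape) : HasContent (canonT A) (A.rowsK 1) := by
  intro v
  rw [canon_contentCount]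
  rw [sorted_getD_eq_card (A.rowsK 1) (by rw [rowsK_one_eq]; exact sortDesc_sorted _)
    A.numCols v (rowsK_le_numCols A)]
  apply Finset.card_bij (fun p _ => p)
  · intro p hp
    simp only [Finset.mem_filter, Finset.mem_Icc] at hp ⊢
    obtain ⟨⟨h1, h2⟩, h3⟩ := hp
    refine ⟨⟨h1, h2⟩, ?_⟩
    rw [rowsK_filter_length A p h1]
    exact h3
  · intro p q hp hq h; exact h
  · intro p hp
    simp only [Finset.mem_filter, Finset.mem_Icc] at hp
    obtain ⟨⟨h1, h2⟩, h3⟩ := hp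
    refine ⟨p, ?_, rfl⟩
    simp only [Finset.mem_filter, Finset.mem_Icc]
    refine ⟨⟨h1, h2⟩, ?_⟩
    rw [← rowsK_filter_length A p h1]
    exact h3

/-- The row containing the matching `v+1` for parameter `p`. -/
noncomputable def nextUp (A : SkewShape) (v p : ℕ) : ℕ := sInf {i' | p ≤ rl A i' ∧ g A p i' = v + 1}

lemma nextUp_spec (A : SkewShape) {v p i2 : ℕ} (hq : p ≤ rl A i2) (hg : g A p i2 = v + 2) :
    p ≤ rl A (nextUp A v p) ∧ g A p (nextUp A v p) = v + 1 ∧ nextUp A v p < i2 := by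
  obtain ⟨i0, hi0lt, hi0q, hi0c⟩ := cntF_exists (fun i' => p ≤ rl A i')
    (show 1 ≤ v + 1 by omega)
    (by rw [show cntF (fun i' => p ≤ rl A i') (i2 + 1) = g A p i2 from rfl, hg]; omega)
  have hne : ({i' | p ≤ rl A i' ∧ g A p i' = v + 1} : Set ℕ).Nonempty := ⟨i0, hi0q, hi0c⟩
  obtain ⟨h1, h2⟩ := Nat.sInf_mem hne
  refine ⟨h1, h2, ?_⟩
  have he : nextUp A v p = i0 :=
    cntF_unique (fun i' => p ≤ rl A i') h1 hi0q (h2.trans hi0c.symm)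
  have hne2 : i0 ≠ i2 := by
    intro hh
    rw [hh] at hi0c
    rw [show cntF (fun i' => p ≤ rl A i') (i2 + 1) = g A p i2 from rfl, hg] at hi0c
    omega
  omega

lemma canon_isLR (A : SkewShape) : IsLR (canonT A) := by
  rintro ⟨i, j⟩ hc v hE
  apply Finset.card_le_card_of_injOn (fun c =>
    (nextUp A v (A.outer.rowLen c.1 - c.2),
      A.outer.rowLen (nextUp A v (A.outer.rowLen c.1 - c.2)) - (A.outer.rowLen c.1 - c.2)))
  · rintro ⟨i2, j2⟩ hmem
    have hmem : (i2, j2) ∈ A.cells.filter (fun c' => (canonT A).entry c'.1 c'.2 = v + 2 ∧ (readBefore c' (i, j) ∨ c' = (i, j))) := hmem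
    simp only [Finset.mem_coe, Finset.mem_filter] at hmem ⊢
    obtain ⟨hcell2, hE2, hread⟩ := hmem
    have hm2 := (mem_cells_iff A).1 hcell2
    rw [show (canonT A).entry i2 j2 = centry A i2 j2 from rfl, centry, if_pos hcell2] at hE2
    set p := A.outer.rowLen i2 - j2 with hpdef
    have hq2 : p ≤ rl A i2 := by unfold rl; omega
    obtain ⟨w1, w2, w3⟩ := nextUp_spec A hq2 hE2
    set i1 := nextUp A v p
    have hp1 : 1 ≤ p := by omega
    have hrlle : rl A i1 ≤ A.outer.rowLen i1 := Nat.sub_le _ _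
    have hcell1 : (i1, A.outer.rowLen i1 - p) ∈ A.cells := by
      rw [mem_cells_iff]
      unfold rl at w1
      constructor <;> omega
    refine ⟨hcell1, ?_, ?_⟩
    · rw [show (canonT A).entry i1 (A.outer.rowLen i1 - p) = centry A i1 (A.outer.rowLen i1 - p) from rfl,
        centry, if_pos hcell1,
        show A.outer.rowLen i1 - (A.outer.rowLen i1 - p) = p by omega]
      exact w2
    · left
      show i1 < i
      rcases hread with h | h
      · have h' : i2 < i ∨ (i2 = i ∧ j < j2) := h
        rcases h' with h' | ⟨h', -⟩
        · omega
        · omega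
      · simp only [Prod.mk.injEq] at h
        omega
  · rintro ⟨i2, j2⟩ h2 ⟨i3, j3⟩ h3 heq
    simp only [Finset.coe_filter, Set.mem_setOf_eq] at h2 h3
    obtain ⟨hcell2, hE2, -⟩ := h2
    obtain ⟨hcell3, hE3, -⟩ := h3
    have hm2 := (mem_cells_iff A).1 hcell2
    have hm3 := (mem_cells_iff A).1 hcell3
    rw [show (canonT A).entry i2 j2 = centry A i2 j2 from rfl, centry, if_pos hcell2] at hE2
    rw [show (canonT A).entry i3 j3 = centry A i3 j3 from rfl, centry, if_pos hcell3] at hE3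
    simp only [Prod.mk.injEq] at heq
    set p2 := A.outer.rowLen i2 - j2 with hp2def
    set p3 := A.outer.rowLen i3 - j3 with hp3def
    have hq2 : p2 ≤ rl A i2 := by unfold rl; omega
    have hq3 : p3 ≤ rl A i3 := by unfold rl; omega
    obtain ⟨w1, w2, w3⟩ := nextUp_spec A hq2 hE2
    obtain ⟨u1, u2, u3⟩ := nextUp_spec A hq3 hE3
    obtain ⟨heq1, heq2⟩ := heq
    rw [← heq1] at u1 u2 heq2
    have hpp : p2 = p3 := by
      have a1 : p2 ≤ A.outer.rowLen (nextUp A v p2) := le_trans w1 (Nat.sub_le _ _)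
      have a2 : p3 ≤ A.outer.rowLen (nextUp A v p2) := le_trans u1 (Nat.sub_le _ _)
      omega
    rw [← hpp] at hE3 hq3
    have hii : i2 = i3 := cntF_unique (fun i' => p2 ≤ rl A i') hq2 hq3 (hE2.trans hE3.symm)
    subst hii
    have : j2 = j3 := by omega
    rw [this]

lemma part1 (A : SkewShape) : A.rowsK 1 ∈ A.support :=
  ⟨by rw [rowsK_one_eq]; exact sortDesc_sorted _, canonT A, canon_isLR A, canon_hasContent A⟩

lemma readBefore_total (c c' : ℕ × ℕ) : c = c' ∨ readBefore c c' ∨ readBefore c' c := by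
  rcases lt_trichotomy c.1 c'.1 with h | h | h
  · right; left; exact Or.inl h
  · rcases lt_trichotomy c.2 c'.2 with h2 | h2 | h2
    · right; right; exact Or.inr ⟨h.symm, h2⟩
    · left; exact Prod.ext h h2
    · right; left; exact Or.inr ⟨h, h2⟩
  · right; right; exact Or.inl h

lemma key_lt_of_readBefore {M : ℕ} {c c' : ℕ × ℕ} (h2 : c.2 < M) (h2' : c'.2 < M)
    (h : readBefore c c') :
    c.1 * M + (M - 1 - c.2) < c'.1 * M + (M - 1 - c'.2) := by
  rcases h with h | ⟨he, hl⟩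
  · have h3 : (c.1 + 1) * M ≤ c'.1 * M := Nat.mul_le_mul_right M (by omega)
    rw [add_mul, one_mul] at h3
    set x := c.1 * M
    set y := c'.1 * M
    omega
  · rw [he]
    set y := c'.1 * M
    omega

lemma exists_read_max (A : SkewShape) (s : Finset (ℕ × ℕ)) (hs : s.Nonempty)
    (hsub : s ⊆ A.cells) : ∃ c ∈ s, ∀ c' ∈ s, c' = c ∨ readBefore c' c := by
  obtain ⟨c, hc, hmax⟩ := Finset.exists_max_image s
    (fun c => c.1 * A.numCols + (A.numCols - 1 - c.2)) hs
  refine ⟨c, hc, fun c' hc' => ?_⟩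
  rcases readBefore_total c' c with h | h | h
  · exact Or.inl h
  · exact Or.inr h
  · exact absurd (hmax c' hc')
      (not_le.2 (key_lt_of_readBefore (col_lt_numCols A (hsub hc)) (col_lt_numCols A (hsub hc')) h))

lemma lattice_mono (A : SkewShape) (T : SkewSsyt A) (hLR : IsLR T)
    (P : ℕ × ℕ → Prop) [DecidablePred P]
    (hP : ∀ c c', P c → readBefore c' c → P c')
    (w : ℕ) (hw : 1 ≤ w) :
    (A.cells.filter (fun c => P c ∧ T.entry c.1 c.2 = w + 1)).card ≤
    (A.cells.filter (fun c => P c ∧ T.entry c.1 c.2 = w)).card := by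
  set s := A.cells.filter (fun c => P c ∧ T.entry c.1 c.2 = w + 1) with hs
  rcases s.eq_empty_or_nonempty with he | hne
  · rw [he]; simp
  obtain ⟨cm, hcm, hmax⟩ := exists_read_max A s hne (by rw [hs]; exact Finset.filter_subset _ _)
  obtain ⟨hcmcell, hcmP, hcmE⟩ := Finset.mem_filter.1 hcm
  have hIsLR := hLR cm hcmcell (w - 1) (by omega)
  calc s.card ≤ (A.cells.filter
        (fun c' => T.entry c'.1 c'.2 = w - 1 + 2 ∧ (readBefore c' cm ∨ c' = cm))).card := by
        apply Finset.card_le_card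
        intro c' hc'
        obtain ⟨h1, _, h3⟩ := Finset.mem_filter.1 hc'
        refine Finset.mem_filter.2 ⟨h1, by omega, ?_⟩
        rcases hmax c' hc' with h | h
        · exact Or.inr h
        · exact Or.inl h
    _ ≤ (A.cells.filter (fun c' => T.entry c'.1 c'.2 = w - 1 + 1 ∧ readBefore c' cm)).card := hIsLR
    _ ≤ (A.cells.filter (fun c => P c ∧ T.entry c.1 c.2 = w)).card := by
        apply Finset.card_le_card
        intro c' hc'
        obtain ⟨h1, h2, h3⟩ := Finset.mem_filter.1 hc'
        exact Finset.mem_filter.2 ⟨h1, hP cm c' hcmP h3, by omega⟩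

lemma entry_pos' (A : SkewShape) (T : SkewSsyt A) {c : ℕ × ℕ} (hc : c ∈ A.cells) :
    1 ≤ T.entry c.1 c.2 :=
  T.pos c.1 c.2 (by rwa [Prod.mk.eta])

lemma cnt_anti (A : SkewShape) (T : SkewSsyt A) (hLR : IsLR T) (w w' : ℕ)
    (hw : 1 ≤ w) (hww : w ≤ w') : contentCount T w' ≤ contentCount T w := by
  induction w', hww using Nat.le_induction with
  | base => exact le_refl _
  | succ n hn ih =>
    refine le_trans ?_ ih
    have h := lattice_mono A T hLR (fun _ => True) (fun _ _ _ _ => trivial) n (by omega)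
    unfold contentCount
    calc (A.cells.filter (fun c => T.entry c.1 c.2 = n + 1)).card
        = (A.cells.filter (fun c => True ∧ T.entry c.1 c.2 = n + 1)).card := by
          congr 1; exact (Finset.filter_congr (fun x _ => by simp)).symm
      _ ≤ (A.cells.filter (fun c => True ∧ T.entry c.1 c.2 = n)).card := h
      _ = (A.cells.filter (fun c => T.entry c.1 c.2 = n)).card := by
          congr 1; exact Finset.filter_congr (fun x _ => by simp)

lemma card_entry_le (A : SkewShape) (T : SkewSsyt A) (k : ℕ) :
    (A.cells.filter (fun c => T.entry c.1 c.2 ≤ k)).card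
      = ∑ v ∈ Finset.range k, contentCount T (v + 1) := by
  induction k with
  | zero =>
    rw [Finset.sum_range_zero, Finset.card_eq_zero, Finset.filter_eq_empty_iff]
    intro c hc
    have := entry_pos' A T hc
    omega
  | succ k ih =>
    rw [Finset.sum_range_succ, ← ih]
    have hsplit : A.cells.filter (fun c => T.entry c.1 c.2 ≤ k + 1)
        = A.cells.filter (fun c => T.entry c.1 c.2 ≤ k)
          ∪ A.cells.filter (fun c => T.entry c.1 c.2 = k + 1) := by
      rw [← Finset.filter_or]
      apply Finset.filter_congr
      intro c _
      constructor
      · intro h; omega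
      · intro h; omega
    rw [hsplit, Finset.card_union_of_disjoint]
    · rfl
    · rw [Finset.disjoint_left]
      intro c h1 h2
      obtain ⟨-, e1⟩ := Finset.mem_filter.1 h1
      obtain ⟨-, e2⟩ := Finset.mem_filter.1 h2
      omega

lemma entry_le_card (A : SkewShape) (T : SkewSsyt A) (hLR : IsLR T) {c : ℕ × ℕ}
    (hc : c ∈ A.cells) : T.entry c.1 c.2 ≤ A.cells.card := by
  by_contra hcon
  push_neg at hcon
  set e := T.entry c.1 c.2 with he
  have hcnt : 1 ≤ contentCount T e := by
    apply Finset.card_pos.2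
    exact ⟨c, Finset.mem_filter.2 ⟨hc, rfl⟩⟩
  have hall : ∀ v ∈ Finset.range e, 1 ≤ contentCount T (v + 1) := by
    intro v hv
    rw [Finset.mem_range] at hv
    exact le_trans hcnt (cnt_anti A T hLR (v + 1) e (by omega) (by omega))
  have hsum : e ≤ ∑ v ∈ Finset.range e, contentCount T (v + 1) := by
    calc e = ∑ _v ∈ Finset.range e, 1 := by rw [Finset.sum_const, Finset.card_range, smul_eq_mul, mul_one]
      _ ≤ _ := Finset.sum_le_sum hall
  rw [← card_entry_le A T e] at hsum
  have := Finset.card_le_card (Finset.filter_subset (fun c => T.entry c.1 c.2 ≤ e) A.cells)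
  omega

lemma K_base (A : SkewShape) (T : SkewSsyt A) (hLR : IsLR T) (i w : ℕ)
    (hB : A.cells.card ≤ w) :
    (A.cells.filter (fun c => c.1 = i ∧ w < T.entry c.1 c.2)).card = 0 := by
  rw [Finset.card_eq_zero, Finset.filter_eq_empty_iff]
  intro c hc hcon
  have := entry_le_card A T hLR hc
  omega

lemma rowGT_split (A : SkewShape) (T : SkewSsyt A) (i w : ℕ) :
    (A.cells.filter (fun c => c.1 = i ∧ w < T.entry c.1 c.2)).card
      = (A.cells.filter (fun c => c.1 = i ∧ T.entry c.1 c.2 = w + 1)).card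
        + (A.cells.filter (fun c => c.1 = i ∧ w + 1 < T.entry c.1 c.2)).card := by
  rw [← Finset.card_union_of_disjoint (by
    rw [Finset.disjoint_left]
    intro c h1 h2
    obtain ⟨-, -, e1⟩ := Finset.mem_filter.1 h1
    obtain ⟨-, -, e2⟩ := Finset.mem_filter.1 h2
    omega), ← Finset.filter_or]
  congr 1
  apply Finset.filter_congr
  intro c _
  omega

lemma K_ineq (A : SkewShape) (T : SkewSsyt A) (hLR : IsLR T) (i w : ℕ) (hw : 1 ≤ w) :
    (A.cells.filter (fun c => c.1 = i ∧ w < T.entry c.1 c.2)).card ≤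
    (A.cells.filter (fun c => c.1 < i ∧ T.entry c.1 c.2 = w)).card := by
  suffices h : ∀ d w, 1 ≤ w → A.cells.card ≤ w + d →
      (A.cells.filter (fun c => c.1 = i ∧ w < T.entry c.1 c.2)).card ≤
      (A.cells.filter (fun c => c.1 < i ∧ T.entry c.1 c.2 = w)).card by
    exact h A.cells.card w hw (by omega)
  intro d
  induction d with
  | zero =>
    intro w hw hB
    rw [K_base A T hLR i w (by omega)]
    exact Nat.zero_le _
  | succ d ih =>
    intro w hw hB
    by_cases hbig : A.cells.card ≤ w
    · rw [K_base A T hLR i w hbig]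
      exact Nat.zero_le _
    · have hrec := ih (w + 1) (by omega) (by omega)
      have hmono := lattice_mono A T hLR (fun c => c.1 < i)
        (fun c c' hc hr => by
          have hr' : c'.1 < c.1 ∨ (c'.1 = c.1 ∧ c.2 < c'.2) := hr
          rcases hr' with h | ⟨h, -⟩
          · omega
          · omega) w hw
      rw [rowGT_split A T i w]
      rcases (A.cells.filter (fun c => c.1 = i ∧ T.entry c.1 c.2 = w + 1)).eq_empty_or_nonempty
        with he | hne
      · rw [he, Finset.card_empty, zero_add]
        exact le_trans hrec hmono
      · obtain ⟨cm, hcm, hmax⟩ := exists_read_max A _ hne (Finset.filter_subset _ _)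
        obtain ⟨hcmcell, hcmrow, hcmE⟩ := Finset.mem_filter.1 hcm
        have hIsLR := hLR cm hcmcell (w - 1) (by omega)
        have hα : (A.cells.filter (fun c => c.1 = i ∧ T.entry c.1 c.2 = w + 1)).card
            + (A.cells.filter (fun c => c.1 < i ∧ T.entry c.1 c.2 = w + 1)).card
            ≤ (A.cells.filter
                (fun c' => T.entry c'.1 c'.2 = w - 1 + 2 ∧ (readBefore c' cm ∨ c' = cm))).card := by
          rw [← Finset.card_union_of_disjoint (by
            rw [Finset.disjoint_left]
            intro c h1 h2
            obtain ⟨-, e1, -⟩ := Finset.mem_filter.1 h1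
            obtain ⟨-, e2, -⟩ := Finset.mem_filter.1 h2
            omega)]
          apply Finset.card_le_card
          intro c' hc'
          rcases Finset.mem_union.1 hc' with h | h
          · obtain ⟨h1, h2, h3⟩ := Finset.mem_filter.1 h
            refine Finset.mem_filter.2 ⟨h1, by omega, ?_⟩
            rcases hmax c' h with hh | hh
            · exact Or.inr hh
            · exact Or.inl hh
          · obtain ⟨h1, h2, h3⟩ := Finset.mem_filter.1 h
            refine Finset.mem_filter.2 ⟨h1, by omega, Or.inl ?_⟩
            exact Or.inl (show c'.1 < cm.1 by omega)
        have hγ : (A.cells.filter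
              (fun c' => T.entry c'.1 c'.2 = w - 1 + 1 ∧ readBefore c' cm)).card
            ≤ (A.cells.filter (fun c => c.1 < i ∧ T.entry c.1 c.2 = w)).card := by
          apply Finset.card_le_card
          intro c' hc'
          obtain ⟨h1, h2, h3⟩ := Finset.mem_filter.1 hc'
          refine Finset.mem_filter.2 ⟨h1, ?_, by omega⟩
          have h3' : c'.1 < cm.1 ∨ (c'.1 = cm.1 ∧ cm.2 < c'.2) := h3
          rcases h3' with h | ⟨hrow, hcol⟩
          · omega
          · exfalso
            have hcell2 : (cm.1, c'.2) ∈ A.cells := by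
              rw [← hrow, Prod.mk.eta]
              exact h1
            have hw1 := T.row_weak cm.1 cm.2 c'.2 (le_of_lt hcol) (by rwa [Prod.mk.eta]) hcell2
            have h2' : T.entry cm.1 c'.2 = w - 1 + 1 := by rw [← hrow]; exact h2
            omega
        omega

lemma row_card (A : SkewShape) (i : ℕ) :
    (A.cells.filter (fun c => c.1 = i)).card = rl A i := by
  rw [show rl A i = (Finset.Ico (A.inner.rowLen i) (A.outer.rowLen i)).card by
    rw [Nat.card_Ico]; rfl]
  apply Finset.card_bij (fun c _ => c.2)
  · rintro ⟨i', j⟩ hc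
    obtain ⟨h1, h2⟩ := Finset.mem_filter.1 hc
    simp only at h2
    subst h2
    have := (mem_cells_iff A).1 h1
    rw [Finset.mem_Ico]
    exact this
  · rintro ⟨i1, j1⟩ h1 ⟨i2, j2⟩ h2 heq
    obtain ⟨-, e1⟩ := Finset.mem_filter.1 h1
    obtain ⟨-, e2⟩ := Finset.mem_filter.1 h2
    simp only at e1 e2 heq
    rw [Prod.mk.injEq]
    exact ⟨by omega, heq⟩
  · intro j hj
    rw [Finset.mem_Ico] at hj
    exact ⟨(i, j), Finset.mem_filter.2 ⟨(mem_cells_iff A).2 ⟨hj.1, hj.2⟩, rfl⟩, rfl⟩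

lemma At_split (A : SkewShape) (T : SkewSsyt A) (t i : ℕ) :
    (A.cells.filter (fun c => c.1 < i + 1 ∧ T.entry c.1 c.2 ≤ t + 1)).card
      = (A.cells.filter (fun c => c.1 < i ∧ T.entry c.1 c.2 ≤ t)).card
        + (A.cells.filter (fun c => c.1 < i ∧ T.entry c.1 c.2 = t + 1)).card
        + (A.cells.filter (fun c => c.1 = i ∧ T.entry c.1 c.2 ≤ t + 1)).card := by
  rw [← Finset.card_union_of_disjoint (by
      rw [Finset.disjoint_left]
      intro c h1 h2
      obtain ⟨-, -, e1⟩ := Finset.mem_filter.1 h1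
      obtain ⟨-, -, e2⟩ := Finset.mem_filter.1 h2
      omega), ← Finset.filter_or,
    ← Finset.card_union_of_disjoint (by
      rw [Finset.disjoint_left]
      intro c h1 h2
      obtain ⟨-, e1⟩ := Finset.mem_filter.1 h1
      obtain ⟨-, e2, -⟩ := Finset.mem_filter.1 h2
      omega), ← Finset.filter_or]
  congr 1
  apply Finset.filter_congr
  intro c _
  omega

lemma row_split (A : SkewShape) (T : SkewSsyt A) (i w : ℕ) :
    (A.cells.filter (fun c => c.1 = i ∧ T.entry c.1 c.2 ≤ w)).card
      + (A.cells.filter (fun c => c.1 = i ∧ w < T.entry c.1 c.2)).card = rl A i := by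
  rw [← row_card A i, ← Finset.card_union_of_disjoint (by
    rw [Finset.disjoint_left]
    intro c h1 h2
    obtain ⟨-, -, e1⟩ := Finset.mem_filter.1 h1
    obtain ⟨-, -, e2⟩ := Finset.mem_filter.1 h2
    omega), ← Finset.filter_or]
  congr 1
  apply Finset.filter_congr
  intro c _
  omega

lemma valDP_le_At (A : SkewShape) (T : SkewSsyt A) (hLR : IsLR T) :
    ∀ i t, valDP (rl A) t i ≤
      (A.cells.filter (fun c => c.1 < i ∧ T.entry c.1 c.2 ≤ t)).card := by
  intro i
  induction i with
  | zero => intro t; cases t <;> simp [valDP]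
  | succ i ih =>
    intro t
    cases t with
    | zero => simp [valDP]
    | succ t =>
      rw [show valDP (rl A) (t + 1) (i + 1)
          = max (valDP (rl A) (t + 1) i) (rl A i + valDP (rl A) t i) from rfl]
      apply max_le
      · refine le_trans (ih (t + 1)) (Finset.card_le_card ?_)
        intro c hc
        obtain ⟨h1, h2, h3⟩ := Finset.mem_filter.1 hc
        exact Finset.mem_filter.2 ⟨h1, by omega, h3⟩
      · have h1 := ih t
        have h2 := K_ineq A T hLR i (t + 1) (by omega)
        have h3 := At_split A T t i
        have h4 := row_split A T i (t + 1)
        omega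

lemma part2 (A : SkewShape) (lam : List ℕ) (hlam : lam ∈ A.support) :
    Dom (A.rowsK 1) lam := by
  obtain ⟨hsort, T, hLR, hcont⟩ := hlam
  intro k
  have hRHS : (lam.take k).sum = (A.cells.filter (fun c => T.entry c.1 c.2 ≤ k)).card := by
    rw [take_sum_eq, card_entry_le A T k]
    apply Finset.sum_congr rfl
    intro v _
    exact (hcont v).symm
  have hmapeq : (List.range A.numRows).map (A.overlap 1)
      = (List.range A.numRows).map (rl A) :=
    List.map_congr_left (fun i _ => overlap_one A i)
  have hsubperm : ((A.rowsK 1).take k).Subperm ((List.range A.numRows).map (rl A)) := by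
    rw [← hmapeq, rowsK_one_eq]
    refine List.Subperm.trans
      (l₂ := ((List.range A.numRows).map (A.overlap 1)).filter (fun x => 0 < x)) ?_
      ((List.filter_sublist).subperm)
    exact List.Subperm.trans (List.take_sublist _ _).subperm (sortDesc_perm _).subperm
  have hsub : (((A.rowsK 1).take k : List ℕ) : Multiset ℕ)
      ≤ (Multiset.range A.numRows).map (rl A) := by
    rw [show (Multiset.range A.numRows) = ((List.range A.numRows : List ℕ) : Multiset ℕ) from rfl,
      Multiset.map_coe, Multiset.coe_le]
    exact hsubperm
  have hLHS : ((A.rowsK 1).take k).sum ≤ valDP (rl A) k A.numRows := by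
    have := multiset_sum_le_valDP (rl A) A.numRows (((A.rowsK 1).take k : List ℕ) : Multiset ℕ) k
      hsub (by rw [Multiset.coe_card]; exact le_trans (List.length_take_le _ _) (le_refl _))
    rwa [Multiset.sum_coe] at this
  have hval := valDP_le_At A T hLR A.numRows k
  have hAt : (A.cells.filter (fun c => c.1 < A.numRows ∧ T.entry c.1 c.2 ≤ k)).card
      = (A.cells.filter (fun c => T.entry c.1 c.2 ≤ k)).card := by
    congr 1
    apply Finset.filter_congr
    intro c hc
    have := row_lt_numRows A hc
    constructor
    · intro h; exact h.2
    · intro h; exact ⟨this, h⟩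
  omega

end RowsProofAux

/-- sharpness of the lower bound, Remark `rem:extreme_fillings`.
For any skew shape `A`, the partition `rows(A)` (the weakly decreasing rearrangement of
the row lengths of `A`) lies in the support of `A` — i.e. `A` admits a Littlewood–
Richardson filling of content `rows(A)` — and it is the least dominant element of the
support: every partition `λ` in the support of `A` satisfies `rows(A) ⊴ λ`. -/
theorem rows_mem_support_and_least_dominant (A : SkewShape) :
    A.rowsK 1 ∈ A.support ∧ ∀ lam ∈ A.support, Dom (A.rowsK 1) lam := by
  exact ⟨RowsProofAux.part1 A, fun lam hlam => RowsProofAux.part2 A lam hlam⟩
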